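/- Suppose ε is real with |ε| < 1, Y : ℝ → ℝ is twice continuously differentiable, λ ∈ ℝ, and Y''(y) − ε·Y''(−y) + λ·Y(y) = 0 for all y ∈ (−π,π), with Y(−π) = Y(π) = 0 and Y not identically zero on (−π,π). Then λ > 0. -/

import Mathlib

open MeasureTheory intervalIntegral Set Real Filter

theorem dirichlet_eigenvalue_positive (ε : ℝ) (hε : |ε| < 1) (Y : ℝ → ℝ) (lam : ℝ)
    (hY : ContDiff ℝ 2 Y)
    (heq : ∀ y ∈ Set.Ioo (-Real.pi) Real.pi,
      deriv (deriv Y) y - ε * deriv (deriv Y) (-y) + lam * Y y = 0)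
    (hbc1 : Y (-Real.pi) = 0) (hbc2 : Y Real.pi = 0)
    (hne : ∃ y ∈ Set.Ioo (-Real.pi) Real.pi, Y y ≠ 0) :
    0 < lam := by
  set f := deriv Y with hf
  set g := deriv f with hg
  have hπ : -Real.pi < Real.pi := by linarith [Real.pi_pos]
  have hf1 : ContDiff ℝ 1 f := by
    have := hY.iterate_deriv' 1 1; simp at this; exact this
  have hYc : Continuous Y := hY.continuous
  have hfc : Continuous f := hf1.continuous
  have hgc : Continuous g := hf1.continuous_deriv le_rfl
  have hY' : ∀ y, HasDerivAt Y (f y) y := fun y =>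
    ((hY.differentiable (by norm_num)) y).hasDerivAt
  have hf' : ∀ y, HasDerivAt f (g y) y := fun y =>
    ((hf1.differentiable (by norm_num)) y).hasDerivAt
  -- abbreviations for the integrals
  set A := ∫ y in (-Real.pi)..Real.pi, f y * f y with hA
  set B := ∫ y in (-Real.pi)..Real.pi, Y y * Y y with hB
  set C := ∫ y in (-Real.pi)..Real.pi, f (-y) * f y with hC
  -- integrability facts
  have i1 : IntervalIntegrable (fun y => g y * Y y) volume (-Real.pi) Real.pi :=
    ((hgc.mul hYc).intervalIntegrable _ _)
  have i2 : IntervalIntegrable (fun y => f y * f y) volume (-Real.pi) Real.pi :=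
    ((hfc.mul hfc).intervalIntegrable _ _)
  have i3 : IntervalIntegrable (fun y => g (-y) * Y y) volume (-Real.pi) Real.pi :=
    (((hgc.comp continuous_neg).mul hYc).intervalIntegrable _ _)
  have i4 : IntervalIntegrable (fun y => f (-y) * f y) volume (-Real.pi) Real.pi :=
    (((hfc.comp continuous_neg).mul hfc).intervalIntegrable _ _)
  have i5 : IntervalIntegrable (fun y => Y y * Y y) volume (-Real.pi) Real.pi :=
    ((hYc.mul hYc).intervalIntegrable _ _)
  -- integration by parts 1 : ∫ g Y = -A
  have key1 : (∫ y in (-Real.pi)..Real.pi, g y * Y y) = -A := by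
    have hD : ∀ y ∈ Set.uIcc (-Real.pi) Real.pi,
        HasDerivAt (fun y => f y * Y y) (g y * Y y + f y * f y) y :=
      fun y _ => (hf' y).mul (hY' y)
    have := intervalIntegral.integral_eq_sub_of_hasDerivAt hD (i1.add i2)
    rw [intervalIntegral.integral_add i1 i2] at this
    rw [hbc1, hbc2] at this
    simp at this
    linarith [this]
  -- integration by parts 2 : ∫ g(-y) Y = C
  have key2 : (∫ y in (-Real.pi)..Real.pi, g (-y) * Y y) = C := by
    have hD : ∀ y ∈ Set.uIcc (-Real.pi) Real.pi,
        HasDerivAt (fun y => -(f (-y) * Y y)) (-(g (-y) * (-1) * Y y + f (-y) * f y)) y := by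
      intro y _
      exact (((hf' (-y)).comp y (hasDerivAt_neg y)).mul (hY' y)).neg
    have := intervalIntegral.integral_eq_sub_of_hasDerivAt hD ((i3.sub i4).congr ?_ )
    · rw [show (fun y => -(g (-y) * (-1) * Y y + f (-y) * f y)) =
          (fun y => g (-y) * Y y - f (-y) * f y) from by funext y; ring] at this
      rw [intervalIntegral.integral_sub i3 i4] at this
      rw [hbc1, hbc2] at this
      simp at this
      linarith [this]
    · intro y _
      beta_reduce
      ring
  -- the weak form of the equation
  have key3 : -A - ε * C + lam * B = 0 := by
    have hzero : (∫ y in (-Real.pi)..Real.pi,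
        (g y * Y y - ε * (g (-y) * Y y) + lam * (Y y * Y y))) = 0 := by
      have hae : ∀ᵐ y : ℝ, y ∈ Set.uIoc (-Real.pi) Real.pi →
          g y * Y y - ε * (g (-y) * Y y) + lam * (Y y * Y y) = 0 := by
        have hsing : ∀ᵐ y : ℝ, y ≠ Real.pi := by
          rw [MeasureTheory.ae_iff]
          simp [Real.volume_singleton]
        filter_upwards [hsing] with y hy hmem
        rw [Set.uIoc_of_le hπ.le] at hmem
        have hy2 : y ∈ Set.Ioo (-Real.pi) Real.pi := ⟨hmem.1, lt_of_le_of_ne hmem.2 hy⟩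
        have h0 := heq y hy2
        linear_combination h0 * Y y
      calc (∫ y in (-Real.pi)..Real.pi,
            (g y * Y y - ε * (g (-y) * Y y) + lam * (Y y * Y y)))
          = ∫ y in (-Real.pi)..Real.pi, (0:ℝ) := intervalIntegral.integral_congr_ae hae
        _ = 0 := by simp
    rw [intervalIntegral.integral_add ((i1.sub (i3.const_mul ε))) (i5.const_mul lam),
        intervalIntegral.integral_sub i1 (i3.const_mul ε),
        intervalIntegral.integral_const_mul, intervalIntegral.integral_const_mul,
        key1, key2] at hzero
    linarith [hzero]
  -- ∫ f(-y)^2 = A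
  have hAneg : (∫ y in (-Real.pi)..Real.pi, f (-y) * f (-y)) = A := by
    rw [intervalIntegral.integral_comp_neg (fun y => f y * f y)]
    simp [hA]
  -- ε C ≥ -|ε| A
  have hεC : ε * C ≥ -(|ε| * A) := by
    have hpt : ∀ y : ℝ, -( |ε| / 2 * (f (-y) * f (-y) + f y * f y)) ≤ ε * (f (-y) * f y) := by
      intro y
      have h1 : |ε * (f (-y) * f y)| ≤ |ε| / 2 * (f (-y) * f (-y) + f y * f y) := by
        rw [abs_mul]
        have h2 : |f (-y) * f y| ≤ (f (-y) * f (-y) + f y * f y) / 2 := by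
          rw [abs_mul]
          nlinarith [sq_nonneg (|f (-y)| - |f y|), sq_abs (f (-y)), sq_abs (f y),
            abs_nonneg (f (-y)), abs_nonneg (f y)]
        nlinarith [abs_nonneg ε, abs_nonneg (f (-y) * f y)]
      linarith [neg_abs_le (ε * (f (-y) * f y))]
    have ifn : IntervalIntegrable (fun y => f (-y) * f (-y)) volume (-Real.pi) Real.pi :=
      (((hfc.comp continuous_neg).mul (hfc.comp continuous_neg)).intervalIntegrable _ _)
    have isum : IntervalIntegrable (fun y => -( |ε| / 2 * (f (-y) * f (-y) + f y * f y)))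
        volume (-Real.pi) Real.pi :=
      ((continuous_const.mul (((hfc.comp continuous_neg).mul (hfc.comp continuous_neg)).add
        (hfc.mul hfc))).neg.intervalIntegrable _ _)
    have hmono : (∫ y in (-Real.pi)..Real.pi, -( |ε| / 2 * (f (-y) * f (-y) + f y * f y)))
        ≤ ∫ y in (-Real.pi)..Real.pi, ε * (f (-y) * f y) := by
      apply intervalIntegral.integral_mono_on hπ.le isum (i4.const_mul ε)
      intro x _; exact hpt x
    rw [intervalIntegral.integral_const_mul] at hmono
    have hlhs : (∫ y in (-Real.pi)..Real.pi, -( |ε| / 2 * (f (-y) * f (-y) + f y * f y)))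
        = -(|ε| * A) := by
      rw [show (fun y => -( |ε| / 2 * (f (-y) * f (-y) + f y * f y)))
          = (fun y => (-(|ε| / 2)) * (f (-y) * f (-y) + f y * f y)) from by funext y; ring,
        intervalIntegral.integral_const_mul,
        intervalIntegral.integral_add ifn i2, hAneg]
      ring
    rw [hlhs] at hmono
    exact hmono
  -- A > 0
  have hApos : 0 < A := by
    have hex : ∃ y0 ∈ Set.Ioo (-Real.pi) Real.pi, f y0 ≠ 0 := by
      by_contra h
      push_neg at h
      obtain ⟨y1, hy1, hY1⟩ := hne
      have hconst : ∀ x ∈ Set.Icc y1 Real.pi, Y x = Y y1 := by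
        apply constant_of_has_deriv_right_zero (hYc.continuousOn)
        intro x hx
        have hx' : x ∈ Set.Ioo (-Real.pi) Real.pi := ⟨lt_of_lt_of_le hy1.1 hx.1, hx.2⟩
        have := h x hx'
        have := hY' x
        rw [h x hx'] at this
        exact this.hasDerivWithinAt
      have := hconst Real.pi ⟨hy1.2.le, le_rfl⟩
      rw [hbc2] at this
      exact hY1 this.symm
    obtain ⟨y0, hy0, hfy0⟩ := hex
    apply intervalIntegral.integral_pos hπ
      ((hfc.mul hfc).continuousOn)
      (fun x _ => mul_self_nonneg _)
      ⟨y0, ⟨hy0.1.le, hy0.2.le⟩, mul_self_pos.mpr hfy0⟩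
  -- conclude
  have hBnn : 0 ≤ B := intervalIntegral.integral_nonneg hπ.le (fun u _ => mul_self_nonneg _)
  have hlamB : 0 < lam * B := by nlinarith [abs_nonneg ε]
  by_contra h
  push_neg at h
  have : lam * B ≤ 0 := mul_nonpos_of_nonpos_of_nonneg h hBnn
  linarith
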